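/- Let r, n, m ≥ 1 and let P : ℤ^r → ℂ^{m×n} be the symbol of an m×n system of Fourier multipliers on the torus 𝕋^r. Suppose that for every C > 0, every k ∈ ℝ and every finite set F ⊆ ℤ^r there exists ξ ∈ ℤ^r \ F with λ_min(P(ξ)) < C(1+‖ξ‖²)^{k/2}. Then there exists u : ℤ^r → ℂ^n such that ‖u(ξ)‖₂ ≤ 1 for all ξ, the set {ξ ∈ ℤ^r : ‖u(ξ)‖₂ = 1} is infinite (in particular u is not rapidly decreasing), and ξ ↦ P(ξ)u(ξ) ∈ ℂ^m is rapidly decreasing (i.e. the system is not globally hypoelliptic). -/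
import Mathlib


noncomputable section

open scoped BigOperators

/-- Euclidean (ℓ²) norm of a complex vector. -/
def l2norm {n : Type*} [Fintype n] (v : n → ℂ) : ℝ :=
  Real.sqrt (∑ i, ‖v i‖ ^ 2)

/-- Smallest singular value of a complex matrix, characterized as the infimum of
`‖A v‖₂` over unit vectors `v`. -/
def sminVal {m n : Type*} [Fintype m] [Fintype n] (A : Matrix m n ℂ) : ℝ :=
  sInf {x : ℝ | ∃ v : n → ℂ, l2norm v = 1 ∧ x = l2norm (A.mulVec v)}

/-- The weight `1 + ‖ξ‖²` for a frequency `ξ ∈ ℤ^r`. -/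
def wt {r : ℕ} (ξ : Fin r → ℤ) : ℝ :=
  1 + ∑ i, ((ξ i : ℝ)) ^ 2

/-- A vector-valued sequence indexed by `ℤ^r` is rapidly decreasing. -/
def RapidDecayV {r n : ℕ} (u : (Fin r → ℤ) → (Fin n → ℂ)) : Prop :=
  ∀ M : ℝ, 0 < M → ∃ C : ℝ, 0 < C ∧ ∀ ξ, l2norm (u ξ) ≤ C * wt ξ ^ (-(M / 2))

/- ### Auxiliary lemmas and definitions -/

lemma l2norm_nonneg' {n : Type*} [Fintype n] (v : n → ℂ) : 0 ≤ l2norm v :=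
  Real.sqrt_nonneg _

lemma l2norm_zero' {n : Type*} [Fintype n] : l2norm (0 : n → ℂ) = 0 := by
  simp [l2norm]

lemma one_le_wt' {r : ℕ} (ξ : Fin r → ℤ) : 1 ≤ wt ξ := by
  have h : (0:ℝ) ≤ ∑ i, ((ξ i : ℝ))^2 := Finset.sum_nonneg fun i _ => sq_nonneg _
  unfold wt; linarith

lemma wt_pos' {r : ℕ} (ξ : Fin r → ℤ) : 0 < wt ξ :=
  lt_of_lt_of_le one_pos (one_le_wt' ξ)

lemma key_exists {r n m : ℕ} (hn : 1 ≤ n)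
    (P : (Fin r → ℤ) → Matrix (Fin m) (Fin n) ℂ)
    (hP : ∀ C : ℝ, 0 < C → ∀ k : ℝ, ∀ F : Set (Fin r → ℤ), F.Finite →
      ∃ ξ, ξ ∉ F ∧ sminVal (P ξ) < C * wt ξ ^ (k / 2))
    (j : ℕ) (F : Finset (Fin r → ℤ)) :
    ∃ p : (Fin r → ℤ) × (Fin n → ℂ), p.1 ∉ F ∧ l2norm p.2 = 1 ∧
      l2norm ((P p.1).mulVec p.2) < wt p.1 ^ (-(j:ℝ)/2) := by
  obtain ⟨ξ, hξF, hξ⟩ := hP 1 one_pos (-(j:ℝ)) F F.finite_toSet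
  rw [one_mul] at hξ
  set i0 : Fin n := ⟨0, hn⟩ with hi0
  set v0 : Fin n → ℂ := fun i => if i = i0 then 1 else 0 with hv0def
  have hv0 : l2norm v0 = 1 := by
    have h1 : ∀ i, ‖v0 i‖^2 = if i = i0 then (1:ℝ) else 0 := by
      intro i; by_cases h : i = i0 <;> simp [hv0def, h]
    simp only [l2norm, h1, Finset.sum_ite_eq', Finset.mem_univ, if_true]
    exact Real.sqrt_one
  have hne : {x : ℝ | ∃ v : Fin n → ℂ, l2norm v = 1 ∧ x = l2norm ((P ξ).mulVec v)}.Nonempty :=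
    ⟨_, v0, hv0, rfl⟩
  have hξ' : sInf {x : ℝ | ∃ v : Fin n → ℂ, l2norm v = 1 ∧ x = l2norm ((P ξ).mulVec v)}
      < wt ξ ^ (-(j:ℝ)/2) := hξ
  obtain ⟨x, ⟨v, hv1, hx⟩, hxlt⟩ := exists_lt_of_csInf_lt hne hξ'
  refine ⟨(ξ, v), by simpa using hξF, hv1, ?_⟩
  rw [← hx]; exact hxlt

variable {r n m : ℕ}

/-- Finite sets of already-chosen frequencies. -/
def FsAux (pick : ℕ → Finset (Fin r → ℤ) → (Fin r → ℤ) × (Fin n → ℂ)) :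
    ℕ → Finset (Fin r → ℤ)
  | 0 => ∅
  | (j+1) => insert (pick j (FsAux pick j)).1 (FsAux pick j)

def xiAux (pick : ℕ → Finset (Fin r → ℤ) → (Fin r → ℤ) × (Fin n → ℂ)) (j : ℕ) :
    Fin r → ℤ := (pick j (FsAux pick j)).1

def vAux (pick : ℕ → Finset (Fin r → ℤ) → (Fin r → ℤ) × (Fin n → ℂ)) (j : ℕ) :
    Fin n → ℂ := (pick j (FsAux pick j)).2

open Classical in
def uAux (pick : ℕ → Finset (Fin r → ℤ) → (Fin r → ℤ) × (Fin n → ℂ)) :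
    (Fin r → ℤ) → (Fin n → ℂ) := fun x =>
  if h : ∃ j, xiAux pick j = x then vAux pick (Nat.find h) else 0

theorem system_not_GH (r n m : ℕ) (hr : 1 ≤ r) (hn : 1 ≤ n) (hm : 1 ≤ m)
    (P : (Fin r → ℤ) → Matrix (Fin m) (Fin n) ℂ)
    (hP : ∀ C : ℝ, 0 < C → ∀ k : ℝ, ∀ F : Set (Fin r → ℤ), F.Finite →
      ∃ ξ, ξ ∉ F ∧ sminVal (P ξ) < C * wt ξ ^ (k / 2)) :
    ∃ u : (Fin r → ℤ) → (Fin n → ℂ),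
      (∀ ξ, l2norm (u ξ) ≤ 1) ∧
      {ξ : Fin r → ℤ | l2norm (u ξ) = 1}.Infinite ∧
      RapidDecayV (fun ξ => (P ξ).mulVec (u ξ)) := by
  classical
  choose pick hFnot hunit hsmall using key_exists hn P hP
  -- basic facts about the recursive construction
  have hFs : ∀ j, FsAux pick (j+1) = insert (xiAux pick j) (FsAux pick j) := fun j => rfl
  have hmono : ∀ i j, i ≤ j → FsAux pick i ⊆ FsAux pick j := by
    intro i j hij
    induction j with
    | zero =>
      have : i = 0 := Nat.le_zero.mp hij
      simp [this]
    | succ j ih =>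
      rcases Nat.lt_or_ge i (j+1) with h | h
      · exact (ih (Nat.lt_succ_iff.mp h)).trans
          (by rw [hFs]; exact Finset.subset_insert _ _)
      · have : i = j+1 := le_antisymm hij h
        simp [this]
  have hmem : ∀ i j, i < j → xiAux pick i ∈ FsAux pick j := by
    intro i j hij
    have h1 : xiAux pick i ∈ FsAux pick (i+1) := by
      rw [hFs]; exact Finset.mem_insert_self _ _
    exact hmono _ _ hij h1
  have hnotmem : ∀ j, xiAux pick j ∉ FsAux pick j := fun j => hFnot j (FsAux pick j)
  have hinj : Function.Injective (xiAux pick) := by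
    intro i j hij
    by_contra hne
    rcases Ne.lt_or_gt hne with h | h
    · exact hnotmem j (hij ▸ hmem i j h)
    · exact hnotmem i (hij ▸ hmem j i h)
  have hu_at : ∀ j, uAux pick (xiAux pick j) = vAux pick j := by
    intro j
    have h : ∃ i, xiAux pick i = xiAux pick j := ⟨j, rfl⟩
    have hfind : Nat.find h = j := hinj (Nat.find_spec h)
    simp only [uAux, dif_pos h, hfind]
  have hunit' : ∀ j, l2norm (vAux pick j) = 1 := fun j => hunit j (FsAux pick j)
  have hsmall' : ∀ j, l2norm ((P (xiAux pick j)).mulVec (vAux pick j))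
      < wt (xiAux pick j) ^ (-(j:ℝ)/2) := fun j => hsmall j (FsAux pick j)
  refine ⟨uAux pick, ?_, ?_, ?_⟩
  · -- bounded by 1
    intro ξ
    by_cases h : ∃ j, xiAux pick j = ξ
    · obtain ⟨j, rfl⟩ := h
      rw [hu_at j, hunit' j]
    · simp only [uAux, dif_neg h]
      rw [l2norm_zero']; norm_num
  · -- infinitely many of norm one
    have hsub : Set.range (xiAux pick) ⊆ {ξ | l2norm (uAux pick ξ) = 1} := by
      rintro _ ⟨j, rfl⟩
      simp only [Set.mem_setOf_eq, hu_at j]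
      exact hunit' j
    exact (Set.infinite_range_of_injective hinj).mono hsub
  · -- rapid decay of P ξ · u ξ
    intro M hM
    set N := ⌈M⌉₊ with hN
    set C := 1 + ∑ j ∈ Finset.range N,
      l2norm ((P (xiAux pick j)).mulVec (vAux pick j)) * wt (xiAux pick j) ^ (M/2) with hC
    have hterm_nonneg : ∀ j ∈ Finset.range N,
        0 ≤ l2norm ((P (xiAux pick j)).mulVec (vAux pick j)) * wt (xiAux pick j) ^ (M/2) :=
      fun j _ => mul_nonneg (l2norm_nonneg' _) (Real.rpow_nonneg (wt_pos' _).le _)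
    have hC1 : 1 ≤ C := by
      have := Finset.sum_nonneg hterm_nonneg
      rw [hC]; linarith
    have hCpos : 0 < C := lt_of_lt_of_le one_pos hC1
    refine ⟨C, hCpos, ?_⟩
    intro ξ
    simp only
    by_cases h : ∃ j, xiAux pick j = ξ
    · obtain ⟨j, rfl⟩ := h
      rw [hu_at j]
      rcases Nat.lt_or_ge j N with hj | hj
      · -- finitely many exceptional terms, absorbed into C
        have hterm : l2norm ((P (xiAux pick j)).mulVec (vAux pick j)) * wt (xiAux pick j) ^ (M/2)
            ≤ C := by
          have h1 := Finset.single_le_sum hterm_nonneg (Finset.mem_range.mpr hj)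
          rw [hC]; linarith
        have hw : wt (xiAux pick j) ^ (M/2) * wt (xiAux pick j) ^ (-(M/2)) = 1 := by
          rw [← Real.rpow_add (wt_pos' _)]; simp
        calc l2norm ((P (xiAux pick j)).mulVec (vAux pick j))
            = l2norm ((P (xiAux pick j)).mulVec (vAux pick j)) *
              (wt (xiAux pick j) ^ (M/2) * wt (xiAux pick j) ^ (-(M/2))) := by
              rw [hw, mul_one]
          _ = (l2norm ((P (xiAux pick j)).mulVec (vAux pick j)) * wt (xiAux pick j) ^ (M/2)) *
              wt (xiAux pick j) ^ (-(M/2)) := by ring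
          _ ≤ C * wt (xiAux pick j) ^ (-(M/2)) :=
              mul_le_mul_of_nonneg_right hterm (Real.rpow_nonneg (wt_pos' _).le _)
      · -- tail: the smallness forces rapid decay
        have hMj : M ≤ (j : ℝ) := by
          have h1 : M ≤ (N : ℝ) := Nat.le_ceil M
          have h2 : (N : ℝ) ≤ (j : ℝ) := by exact_mod_cast hj
          linarith
        have hexp : -(j:ℝ)/2 ≤ -(M/2) := by linarith
        have h2 : wt (xiAux pick j) ^ (-(j:ℝ)/2) ≤ wt (xiAux pick j) ^ (-(M/2)) :=
          Real.rpow_le_rpow_of_exponent_le (one_le_wt' _) hexp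
        have h3 : l2norm ((P (xiAux pick j)).mulVec (vAux pick j))
            ≤ wt (xiAux pick j) ^ (-(M/2)) := le_trans (hsmall' j).le h2
        calc l2norm ((P (xiAux pick j)).mulVec (vAux pick j))
            ≤ wt (xiAux pick j) ^ (-(M/2)) := h3
          _ = 1 * wt (xiAux pick j) ^ (-(M/2)) := (one_mul _).symm
          _ ≤ C * wt (xiAux pick j) ^ (-(M/2)) :=
              mul_le_mul_of_nonneg_right hC1 (Real.rpow_nonneg (wt_pos' _).le _)
    · simp only [uAux, dif_neg h, Matrix.mulVec_zero]
      rw [l2norm_zero']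
      exact mul_nonneg hCpos.le (Real.rpow_nonneg (wt_pos' _).le _)
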